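/- Let C be a category with binary products, (T, η, μ) a monad on C, I an endofunctor on C, Φ : Cᵒᵖ ⥤ PartOrd a functor such that every reindexing map f⋆ := Φ(f) has a left adjoint ∃_f (a Galois connection ∃_f ⊣ f⋆ between the fibres), and θ_{X,Y} : Hom_C(X, T Y) ≃ Φ(X ⨯ I Y) a family of bijections satisfying (A3.3a) θ_{X,Y}(h ∘ f) = (f ⨯ 1_{I Y})⋆(θ_{X',Y}(h)) for all f : X → X', h : X' → T Y, and (A3.3b) θ_{X,Y'}(T g ∘ h) = ∃_{1_X ⨯ I g}(θ_{X,Y}(h)) for all g : Y → Y', h : X → T Y. Define the membership relation ∈_X := θ_{T X, X}(1_{T X}) ∈ Φ(T X ⨯ I X). Then for every f : X → Y one has ∃_{1_{T X} ⨯ I f}(∈_X) = (T f ⨯ 1_{I Y})⋆(∈_Y). -/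

import Mathlib

open CategoryTheory CategoryTheory.Limits Opposite

universe v u

variable {C : Type u} [Category.{v} C]

/-- Reindexing `f⋆ = Φ(f)` along `f` in an indexed category `Φ : Cᵒᵖ ⥤ PartOrd`. -/
def reindex (Φ : Cᵒᵖ ⥤ PartOrd.{v}) {X Y : C} (f : X ⟶ Y) :
    Φ.obj (op Y) →o Φ.obj (op X) :=
  (Φ.map f.op).hom

/-- Given the bifibration structure `∃_f ⊣ f⋆` on an indexed category
`Φ : Cᵒᵖ ⥤ PartOrd` and bijections `θ` internalizing Kleisli arrows `X → T Y`
as elements of `Φ(X ⨯ I Y)` satisfying (A3.3a) and (A3.3b), the membership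
relation `∈_X = θ(1_{T X})` satisfies
`∃_{1 ⨯ I f}(∈_X) = (T f ⨯ 1)⋆(∈_Y)` for every `f : X ⟶ Y`. -/
theorem membership_relation_shift [HasBinaryProducts C]
    (T : Monad C) (I : C ⥤ C) (Φ : Cᵒᵖ ⥤ PartOrd.{v})
    (E : ∀ {X Y : C}, (X ⟶ Y) → (Φ.obj (op X) → Φ.obj (op Y)))
    (hE : ∀ {X Y : C} (f : X ⟶ Y), GaloisConnection (E f) (reindex Φ f))
    (θ : ∀ X Y : C, (X ⟶ T.obj Y) ≃ Φ.obj (op (X ⨯ I.obj Y)))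
    (hθa : ∀ {X X' Y : C} (f : X ⟶ X') (h : X' ⟶ T.obj Y),
      θ X Y (f ≫ h) = reindex Φ (prod.map f (𝟙 (I.obj Y))) (θ X' Y h))
    (hθb : ∀ {X Y Y' : C} (g : Y ⟶ Y') (h : X ⟶ T.obj Y),
      θ X Y' (h ≫ T.map g) = E (prod.map (𝟙 X) (I.map g)) (θ X Y h)) :
    ∀ {X Y : C} (f : X ⟶ Y),
      E (prod.map (𝟙 (T.obj X)) (I.map f)) (θ (T.obj X) X (𝟙 (T.obj X))) =
        reindex Φ (prod.map (T.map f) (𝟙 (I.obj Y)))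
          (θ (T.obj Y) Y (𝟙 (T.obj Y))) := by
  intro X Y f
  rw [← hθb f (𝟙 _), ← hθa (T.map f) (𝟙 _)]
  simp
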